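/- Let c, σ > 0, let v : [0, 1] → ℝ be continuously differentiable with v(0) = v(1) = 0, and let φ : [0, 1] → ℝ be continuous. Define Φ := ((c² + 1)/σ)·∫₀¹ (v'(x))² dx + (1/σ)·∫₀¹ φ(x)² dx + (1/(σc²))·∫₀¹ (φ(x) + σv(x))² dx. Then (1/σ)·(∫₀¹ (v'(x))² dx + ∫₀¹ φ(x)² dx) ≤ Φ ≤ (1/σ)·max( c² + 1 + 2σ²/(c²π²), 1 + 2/c² )·(∫₀¹ (v'(x))² dx + ∫₀¹ φ(x)² dx). -/

import Mathlib

open intervalIntegral Set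

lemma wirtinger_aux (v : ℝ → ℝ) (hv : ContDiff ℝ 1 v) (hv0 : v 0 = 0) (hv1 : v 1 = 0) :
    Real.pi ^ 2 * ∫ x in (0:ℝ)..1, (v x) ^ 2 ≤ ∫ x in (0:ℝ)..1, (deriv v x) ^ 2 := by
  have hvc : Continuous v := hv.continuous
  have hv'c : Continuous (deriv v) := hv.continuous_deriv le_rfl
  have hd : ∀ x : ℝ, HasDerivAt v (deriv v x) x :=
    fun x => (hv.differentiable one_ne_zero x).hasDerivAt
  have key : ∀ l ∈ Set.Ioo (0:ℝ) Real.pi,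
      l ^ 2 * ∫ x in (0:ℝ)..1, (v x) ^ 2 ≤ ∫ x in (0:ℝ)..1, (deriv v x) ^ 2 := by
    intro l hl
    obtain ⟨hl0, hlπ⟩ := hl
    set h : ℝ → ℝ := fun x => -l * Real.tan (l * (x - 1/2)) with hh
    have hcos : ∀ x ∈ Set.Icc (0:ℝ) 1, Real.cos (l * (x - 1/2)) ≠ 0 := by
      intro x hx
      refine ne_of_gt (Real.cos_pos_of_mem_Ioo ⟨?_, ?_⟩)
      · nlinarith [hx.1, hx.2]
      · nlinarith [hx.1, hx.2]
    have hDh : ∀ x ∈ Set.Icc (0:ℝ) 1, HasDerivAt h (-l^2 - (h x)^2) x := by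
      intro x hx
      have hc := hcos x hx
      have h1 : HasDerivAt (fun y : ℝ => l * (y - 1/2)) l x := by
        have := ((hasDerivAt_id x).sub_const (1/2)).const_mul l
        rw [mul_one] at this
        exact this
      have h2 : HasDerivAt (fun y : ℝ => Real.tan (l * (y - 1/2)))
          (1 / Real.cos (l * (x - 1/2)) ^ 2 * l) x :=
        by have := (Real.hasDerivAt_tan hc).comp x h1; exact this
      have h3 := h2.const_mul (-l)
      refine h3.congr_deriv ?_
      set t := l * (x - 1/2) with ht
      have hc2 : Real.cos t ^ 2 ≠ 0 := pow_ne_zero 2 hc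
      have hid : 1 / Real.cos t ^ 2 = 1 + Real.tan t ^ 2 := by
        rw [Real.tan_eq_sin_div_cos, div_pow]
        have hsc := Real.sin_sq_add_cos_sq t
        field_simp
        linarith
      rw [hid]
      simp only [hh, ← ht]
      ring
    have hhcont : ContinuousOn h (Set.Icc (0:ℝ) 1) := by
      intro x hx
      refine ContinuousAt.continuousWithinAt ?_
      have hcomp : ContinuousAt (Real.tan ∘ fun y : ℝ => l * (y - 1/2)) x :=
        ContinuousAt.comp (Real.continuousAt_tan.mpr (hcos x hx))
          ((continuous_const.mul (continuous_id.sub continuous_const)).continuousAt)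
      exact continuousAt_const.mul hcomp
    set F' : ℝ → ℝ := fun x => (-l^2 - (h x)^2) * (v x)^2 + h x * (2 * v x ^ 1 * deriv v x)
      with hF'
    have hF'cont : ContinuousOn F' (Set.Icc (0:ℝ) 1) := by
      apply ContinuousOn.add
      · exact ((continuousOn_const.sub (hhcont.pow 2)).mul
          ((hvc.continuousOn).pow 2))
      · exact hhcont.mul ((((continuous_const.mul (hvc.pow 1))).mul hv'c).continuousOn)
    have huIcc : Set.uIcc (0:ℝ) 1 = Set.Icc (0:ℝ) 1 := Set.uIcc_of_le (by norm_num)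
    have hInt : IntervalIntegrable F' MeasureTheory.volume 0 1 := by
      apply ContinuousOn.intervalIntegrable
      rwa [huIcc]
    have hDF : ∀ x ∈ Set.uIcc (0:ℝ) 1,
        HasDerivAt (fun y => h y * (v y)^2) (F' x) x := by
      intro x hx
      rw [huIcc] at hx
      exact (hDh x hx).mul ((hd x).pow 2)
    have hFTC : ∫ x in (0:ℝ)..1, F' x = 0 := by
      rw [intervalIntegral.integral_eq_sub_of_hasDerivAt hDF hInt]
      simp [hv0, hv1]
    have hInt1 : IntervalIntegrable (fun x => (deriv v x - h x * v x)^2)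
        MeasureTheory.volume 0 1 := by
      apply ContinuousOn.intervalIntegrable
      rw [huIcc]
      exact ((hv'c.continuousOn.sub (hhcont.mul hvc.continuousOn)).pow 2)
    have hInt2 : IntervalIntegrable (fun x => l^2 * (v x)^2) MeasureTheory.volume 0 1 :=
      (continuous_const.mul (hvc.pow 2)).intervalIntegrable 0 1
    have hsplit : ∫ x in (0:ℝ)..1, (deriv v x)^2
        = (∫ x in (0:ℝ)..1, (deriv v x - h x * v x)^2)
          + (∫ x in (0:ℝ)..1, l^2 * (v x)^2) + ∫ x in (0:ℝ)..1, F' x := by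
      rw [← intervalIntegral.integral_add hInt1 hInt2,
        ← intervalIntegral.integral_add (hInt1.add hInt2) hInt]
      apply intervalIntegral.integral_congr
      intro x _
      simp only [hF']
      ring
    have hnn : 0 ≤ ∫ x in (0:ℝ)..1, (deriv v x - h x * v x)^2 :=
      intervalIntegral.integral_nonneg (by norm_num) (fun x _ => sq_nonneg _)
    rw [hsplit, hFTC, intervalIntegral.integral_const_mul]
    linarith
  -- take the limit l → π
  have hne : (nhdsWithin Real.pi (Set.Ioo 0 Real.pi)).NeBot :=
    right_nhdsWithin_Ioo_neBot Real.pi_pos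
  have htend : Filter.Tendsto (fun l : ℝ => l ^ 2 * ∫ x in (0:ℝ)..1, (v x) ^ 2)
      (nhdsWithin Real.pi (Set.Ioo 0 Real.pi))
      (nhds (Real.pi ^ 2 * ∫ x in (0:ℝ)..1, (v x) ^ 2)) :=
    ((continuous_pow 2).mul continuous_const).continuousAt.continuousWithinAt
  exact le_of_tendsto htend (Filter.eventually_of_mem self_mem_nhdsWithin
    fun l hl => key l hl)

/-- The norm-equivalence estimate (4.14) for the Lyapunov functional of the damped wave
PDE (Case C): for `c, σ > 0`, a `C¹` function `v` with `v(0) = v(1) = 0` and continuous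
`φ`, the functional
`Φ = ((c² + 1)/σ)∫₀¹(v')² + (1/σ)∫₀¹φ² + (1/(σc²))∫₀¹(φ + σv)²` satisfies
`(1/σ)(∫₀¹(v')² + ∫₀¹φ²) ≤ Φ ≤ (1/σ)max(c² + 1 + 2σ²/(c²π²), 1 + 2/c²)(∫₀¹(v')² + ∫₀¹φ²)`. -/
theorem wave_lyapunov_norm_equivalence (c σ : ℝ) (hc : 0 < c) (hσ : 0 < σ)
    (v φ : ℝ → ℝ) (hv : ContDiff ℝ 1 v) (hv0 : v 0 = 0) (hv1 : v 1 = 0)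
    (hφ : Continuous φ)
    (Φ : ℝ)
    (hΦ : Φ = ((c ^ 2 + 1) / σ) * (∫ x in (0 : ℝ)..1, (deriv v x) ^ 2) +
      (1 / σ) * (∫ x in (0 : ℝ)..1, (φ x) ^ 2) +
      (1 / (σ * c ^ 2)) * ∫ x in (0 : ℝ)..1, (φ x + σ * v x) ^ 2) :
    (1 / σ) * ((∫ x in (0 : ℝ)..1, (deriv v x) ^ 2) + ∫ x in (0 : ℝ)..1, (φ x) ^ 2) ≤ Φ ∧
    Φ ≤ (1 / σ) * max (c ^ 2 + 1 + 2 * σ ^ 2 / (c ^ 2 * Real.pi ^ 2)) (1 + 2 / c ^ 2) *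
      ((∫ x in (0 : ℝ)..1, (deriv v x) ^ 2) + ∫ x in (0 : ℝ)..1, (φ x) ^ 2) := by
  have hvc : Continuous v := hv.continuous
  have hv'c : Continuous (deriv v) := hv.continuous_deriv le_rfl
  set A := ∫ x in (0:ℝ)..1, (deriv v x) ^ 2 with hA
  set B := ∫ x in (0:ℝ)..1, (φ x) ^ 2 with hB
  set C := ∫ x in (0:ℝ)..1, (φ x + σ * v x) ^ 2 with hC
  set I := ∫ x in (0:ℝ)..1, (v x) ^ 2 with hI
  have hA0 : 0 ≤ A := intervalIntegral.integral_nonneg (by norm_num) (fun x _ => sq_nonneg _)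
  have hB0 : 0 ≤ B := intervalIntegral.integral_nonneg (by norm_num) (fun x _ => sq_nonneg _)
  have hC0 : 0 ≤ C := intervalIntegral.integral_nonneg (by norm_num) (fun x _ => sq_nonneg _)
  have hI0 : 0 ≤ I := intervalIntegral.integral_nonneg (by norm_num) (fun x _ => sq_nonneg _)
  have hπ := Real.pi_pos
  have hW : Real.pi ^ 2 * I ≤ A := wirtinger_aux v hv hv0 hv1
  have hC2 : C ≤ 2 * B + 2 * σ ^ 2 * I := by
    have hmono : C ≤ ∫ x in (0:ℝ)..1, (2 * (φ x) ^ 2 + 2 * σ ^ 2 * (v x) ^ 2) := by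
      apply intervalIntegral.integral_mono_on (by norm_num)
      · exact ((hφ.add (continuous_const.mul hvc)).pow 2).intervalIntegrable 0 1
      · exact ((continuous_const.mul (hφ.pow 2)).add
          (continuous_const.mul (hvc.pow 2))).intervalIntegrable 0 1
      · intro x _
        nlinarith [sq_nonneg (φ x - σ * v x)]
    have heq : ∫ x in (0:ℝ)..1, (2 * (φ x) ^ 2 + 2 * σ ^ 2 * (v x) ^ 2)
        = 2 * B + 2 * σ ^ 2 * I := by
      rw [intervalIntegral.integral_add (f := fun x => 2 * (φ x) ^ 2) (g := fun x => 2 * σ ^ 2 * (v x) ^ 2) ((continuous_const.mul (hφ.pow 2)).intervalIntegrable 0 1)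
        ((continuous_const.mul (hvc.pow 2)).intervalIntegrable 0 1),
        intervalIntegral.integral_const_mul, intervalIntegral.integral_const_mul]
    linarith [heq ▸ hmono]
  constructor
  · rw [hΦ]
    have e1 : ((c ^ 2 + 1) / σ) * A = (1 / σ) * A + (c ^ 2 / σ) * A := by ring
    have p1 : 0 ≤ (c ^ 2 / σ) * A := mul_nonneg (by positivity) hA0
    have p2 : 0 ≤ (1 / (σ * c ^ 2)) * C := mul_nonneg (by positivity) hC0
    nlinarith
  · rw [hΦ]
    set M1 := c ^ 2 + 1 + 2 * σ ^ 2 / (c ^ 2 * Real.pi ^ 2) with hM1def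
    set M2 := 1 + 2 / c ^ 2 with hM2def
    have hM1 : M1 ≤ max M1 M2 := le_max_left _ _
    have hM2 : M2 ≤ max M1 M2 := le_max_right _ _
    have hIA : I ≤ A / Real.pi ^ 2 := by
      rw [le_div_iff₀ (by positivity)]
      linarith [hW]
    have s1 : (1 / (σ * c ^ 2)) * C ≤ (1 / (σ * c ^ 2)) * (2 * B + 2 * σ ^ 2 * I) :=
      mul_le_mul_of_nonneg_left hC2 (by positivity)
    have s2 : (1 / (σ * c ^ 2)) * (2 * B + 2 * σ ^ 2 * I)
        ≤ (1 / (σ * c ^ 2)) * (2 * B + 2 * σ ^ 2 * (A / Real.pi ^ 2)) := by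
      apply mul_le_mul_of_nonneg_left _ (by positivity)
      nlinarith [sq_nonneg σ]
    have e2 : ((c ^ 2 + 1) / σ) * A + (1 / σ) * B
        + (1 / (σ * c ^ 2)) * (2 * B + 2 * σ ^ 2 * (A / Real.pi ^ 2))
        = (1 / σ) * (M1 * A + M2 * B) := by
      rw [hM1def, hM2def]
      field_simp
      ring
    have s3 : (1 / σ) * (M1 * A + M2 * B) ≤ (1 / σ) * (max M1 M2 * A + max M1 M2 * B) := by
      apply mul_le_mul_of_nonneg_left _ (by positivity)
      exact add_le_add (mul_le_mul_of_nonneg_right hM1 hA0)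
        (mul_le_mul_of_nonneg_right hM2 hB0)
    have e3 : (1 / σ) * (max M1 M2 * A + max M1 M2 * B)
        = (1 / σ) * max M1 M2 * (A + B) := by ring
    linarith
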